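/- arXiv:2601.11728 — 4 statements merged into one kernel-verified Lean document; each statement's English description precedes it below -/
import Mathlib

section
/- Let S be a complex inner product space with skew-Hermitian Clifford action c of ℝ^n, and let u ∈ S. For x in the open unit ball of ℝ^n define ζ(x) := ω(x)^{-1/2}(1 - i c(x))u, where ω(x) = (1 - |x|²)/2. Then |ζ(x)|² = 2(V₀(x)|u|² - Σ_{j=1}^n V_j(x)·⟨i c(e_j)u, u⟩), where V₀(x) = (1+|x|²)/(1-|x|²) and V_j(x) = 2x^j/(1-|x|²). -/
local notation "⟪" x ", " y "⟫" => @inner ℂ _ _ x y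

/-- For `ζ(x) = ω(x)^{-1/2}(1 - i c(x))u` with `ω(x) = (1-|x|²)/2` on the open unit
ball, `|ζ(x)|² = 2(V₀(x)|u|² - Σ_j V_j(x)⟨i c(e_j)u, u⟩)` where
`V₀(x) = (1+|x|²)/(1-|x|²)` and `V_j(x) = 2x^j/(1-|x|²)`. -/
theorem stmt6 {n : ℕ} {S : Type*} [NormedAddCommGroup S] [InnerProductSpace ℂ S]
    (c : Fin n → S →ₗ[ℂ] S)
    (hskew : ∀ j (φ ψ : S), ⟪c j φ, ψ⟫ = -⟪φ, c j ψ⟫)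
    (hcliff : ∀ i j, c i ∘ₗ c j + c j ∘ₗ c i
      = if i = j then (-2 : ℂ) • LinearMap.id else 0)
    (u : S) (x : EuclideanSpace ℝ (Fin n)) (hx : ‖x‖ < 1)
    (ζ : S)
    (hζ : ζ = ((Real.sqrt ((1 - ‖x‖ ^ 2) / 2))⁻¹ : ℝ) •
        (u - Complex.I • ∑ j, (x j : ℂ) • c j u)) :
    ‖ζ‖ ^ 2 = 2 * (((1 + ‖x‖ ^ 2) / (1 - ‖x‖ ^ 2)) * ‖u‖ ^ 2
      - ∑ j, (2 * x j / (1 - ‖x‖ ^ 2)) * (⟪Complex.I • c j u, u⟫).re) := by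
  have hx2 : ‖x‖ ^ 2 < 1 := by nlinarith [norm_nonneg x]
  have hω : (0:ℝ) < (1 - ‖x‖ ^ 2) / 2 := by linarith
  set w : S := ∑ j, (x j : ℂ) • c j u with hw
  -- norm of x
  have hnx : ‖x‖ ^ 2 = ∑ i, x i * x i := by
    rw [EuclideanSpace.norm_eq, Real.sq_sqrt (by positivity)]
    simp only [Real.norm_eq_abs, sq_abs, sq, abs_mul_abs_self]
  -- pair lemma
  have hpair : ∀ i j, ⟪c i u, c j u⟫ + ⟪c j u, c i u⟫
      = if i = j then 2 * ⟪u, u⟫ else 0 := by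
    intro i j
    have hc := congrArg (fun f => f u) (hcliff i j)
    simp only [LinearMap.add_apply, LinearMap.comp_apply] at hc
    rw [hskew i u (c j u), hskew j u (c i u), ← neg_add, ← inner_add_right, hc]
    by_cases h : i = j
    · simp [h, inner_smul_right]
    · simp [h]
  -- norm of w
  have hww : ⟪w, w⟫ = ((‖x‖ ^ 2 : ℝ) : ℂ) * ⟪u, u⟫ := by
    have hexp : ⟪w, w⟫ = ∑ i, ∑ j, ((x i : ℂ) * (x j : ℂ)) * ⟪c i u, c j u⟫ := by
      rw [hw, sum_inner]
      refine Finset.sum_congr rfl fun i _ => ?_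
      rw [inner_sum]
      refine Finset.sum_congr rfl fun j _ => ?_
      rw [inner_smul_left, inner_smul_right, Complex.conj_ofReal]
      ring
    have hswap : ∑ i, ∑ j, ((x i : ℂ) * (x j : ℂ)) * ⟪c j u, c i u⟫
        = ∑ i, ∑ j, ((x i : ℂ) * (x j : ℂ)) * ⟪c i u, c j u⟫ := by
      rw [Finset.sum_comm]
      exact Finset.sum_congr rfl fun j _ => Finset.sum_congr rfl fun i _ => by ring
    have h2 : (2:ℂ) * ⟪w, w⟫ = (2:ℂ) * (((‖x‖ ^ 2 : ℝ) : ℂ) * ⟪u, u⟫) := by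
      calc (2:ℂ) * ⟪w, w⟫
          = ∑ i, ∑ j, ((x i : ℂ) * (x j : ℂ)) * (⟪c i u, c j u⟫ + ⟪c j u, c i u⟫) := by
            simp_rw [mul_add, Finset.sum_add_distrib]
            rw [hexp, hswap]; ring
        _ = ∑ i, ∑ j, (if i = j then ((x i : ℂ) * (x j : ℂ)) * (2 * ⟪u, u⟫) else 0) := by
            refine Finset.sum_congr rfl fun i _ => Finset.sum_congr rfl fun j _ => ?_
            rw [hpair i j]
            by_cases h : i = j <;> simp [h]
        _ = ∑ i, ((x i : ℂ) * (x i : ℂ)) * (2 * ⟪u, u⟫) := by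
            simp [Finset.sum_ite_eq']
        _ = (2:ℂ) * (((‖x‖ ^ 2 : ℝ) : ℂ) * ⟪u, u⟫) := by
            rw [hnx]
            push_cast
            rw [Finset.sum_mul, Finset.mul_sum]
            exact Finset.sum_congr rfl fun i _ => by ring
    have := mul_left_cancel₀ (two_ne_zero (α := ℂ)) h2
    exact this
  have hwnorm : ‖w‖ ^ 2 = ‖x‖ ^ 2 * ‖u‖ ^ 2 := by
    have h1 : (⟪w, w⟫).re = ‖w‖ ^ 2 := by
      have := inner_self_eq_norm_sq (𝕜 := ℂ) w
      simpa [RCLike.re_to_complex] using this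
    have h2 : ⟪u, u⟫ = ((‖u‖ : ℂ)) ^ 2 := inner_self_eq_norm_sq_to_K (𝕜 := ℂ) u
    rw [← h1, hww, h2]
    norm_cast
  -- cross term
  have hcross : (⟪u, Complex.I • w⟫).re = ∑ j, x j * (⟪Complex.I • c j u, u⟫).re := by
    rw [hw, Finset.smul_sum, inner_sum, Complex.re_sum]
    refine Finset.sum_congr rfl fun j _ => ?_
    rw [smul_comm, inner_smul_right, inner_smul_right, inner_smul_left,
      ← inner_conj_symm u (c j u)]
    simp only [Complex.mul_re, Complex.mul_im, Complex.I_re, Complex.I_im,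
      Complex.conj_re, Complex.conj_im, Complex.ofReal_re, Complex.ofReal_im]
    ring
  -- norm of v
  have hv : ‖u - Complex.I • w‖ ^ 2
      = ‖u‖ ^ 2 - 2 * ∑ j, x j * (⟪Complex.I • c j u, u⟫).re + ‖x‖ ^ 2 * ‖u‖ ^ 2 := by
    rw [@norm_sub_sq ℂ]
    simp only [RCLike.re_to_complex]
    rw [norm_smul, Complex.norm_I, one_mul, hwnorm, hcross]
  -- assemble
  have hζn : ‖ζ‖ ^ 2 = ((1 - ‖x‖ ^ 2) / 2)⁻¹ * ‖u - Complex.I • w‖ ^ 2 := by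
    rw [hζ, norm_smul, Real.norm_eq_abs, abs_of_nonneg (by positivity), mul_pow,
      ← Real.sqrt_inv, Real.sq_sqrt (by positivity)]
  rw [hζn, hv]
  have hne : (1 - ‖x‖ ^ 2) ≠ 0 := by linarith
  have hsum : ∑ j, (2 * x j / (1 - ‖x‖ ^ 2)) * (⟪Complex.I • c j u, u⟫).re
      = (2 / (1 - ‖x‖ ^ 2)) * ∑ j, x j * (⟪Complex.I • c j u, u⟫).re := by
    rw [Finset.mul_sum]
    exact Finset.sum_congr rfl fun j _ => by ring
  rw [hsum]
  field_simp
  ring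
end

section
/- With the notation of the previous construction (ζ(x) = ω(x)^{-1/2}(1 - i c(x))u on the unit ball) and with a chirality operator γ (Hermitian, γ² = Id, anticommuting with all c(e_j)), the function x ↦ ⟨γ ζ(x), ζ(x)⟩ is constant equal to 2⟨γ u, u⟩. -/
local notation "⟪" x ", " y "⟫" => @inner ℂ _ _ x y

/-- For `ζ(x) = ω(x)^{-1/2}(1 - i c(x))u` on the unit ball and a chirality operator `γ`
(Hermitian, `γ² = Id`, anticommuting with every `c(e_j)`), the function
`x ↦ ⟨γ ζ(x), ζ(x)⟩` is constant equal to `2⟨γu, u⟩`. -/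
theorem stmt7 {n : ℕ} {S : Type*} [NormedAddCommGroup S] [InnerProductSpace ℂ S]
    (c : Fin n → S →ₗ[ℂ] S)
    (hskew : ∀ j (φ ψ : S), ⟪c j φ, ψ⟫ = -⟪φ, c j ψ⟫)
    (hcliff : ∀ i j, c i ∘ₗ c j + c j ∘ₗ c i
      = if i = j then (-2 : ℂ) • LinearMap.id else 0)
    (γ : S →ₗ[ℂ] S)
    (hherm : ∀ (φ ψ : S), ⟪γ φ, ψ⟫ = ⟪φ, γ ψ⟫)
    (hinv : γ ∘ₗ γ = LinearMap.id)
    (hanti : ∀ j, c j ∘ₗ γ + γ ∘ₗ c j = 0)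
    (u : S) (x : EuclideanSpace ℝ (Fin n)) (hx : ‖x‖ < 1)
    (ζ : S)
    (hζ : ζ = ((Real.sqrt ((1 - ‖x‖ ^ 2) / 2))⁻¹ : ℝ) •
        (u - Complex.I • ∑ j, (x j : ℂ) • c j u)) :
    ⟪γ ζ, ζ⟫ = 2 * ⟪γ u, u⟫ := by
  set C : S →ₗ[ℂ] S := ∑ j, (x j : ℂ) • c j with hC
  have hCapp : ∀ φ : S, C φ = ∑ j, (x j : ℂ) • c j φ := by
    intro φ; simp [hC]
  have hanti' : ∀ j (φ : S), γ (c j φ) = - c j (γ φ) := by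
    intro j φ
    have h := congrFun (congrArg DFunLike.coe (hanti j)) φ
    simp only [LinearMap.add_apply, LinearMap.comp_apply, LinearMap.zero_apply] at h
    exact eq_neg_of_add_eq_zero_right h
  have hCγ : ∀ φ : S, γ (C φ) = - C (γ φ) := by
    intro φ
    rw [hCapp, map_sum, hCapp, ← Finset.sum_neg_distrib]
    refine Finset.sum_congr rfl fun j _ => ?_
    rw [map_smul, hanti' j φ, smul_neg]
  have hCskew : ∀ φ ψ : S, ⟪C φ, ψ⟫ = -⟪φ, C ψ⟫ := by
    intro φ ψ
    rw [hCapp, hCapp, sum_inner, inner_sum, ← Finset.sum_neg_distrib]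
    refine Finset.sum_congr rfl fun j _ => ?_
    rw [inner_smul_left, inner_smul_right, hskew]
    simp [mul_neg]
  -- norm squared as a sum
  have hnormsq : (‖x‖ : ℝ) ^ 2 = ∑ i, x i * x i := by
    rw [EuclideanSpace.norm_eq, Real.sq_sqrt (by positivity)]
    refine Finset.sum_congr rfl fun i _ => ?_
    rw [Real.norm_eq_abs, sq_abs, sq]
  -- C² = -‖x‖²
  have hC2 : C (C u) = (-(‖x‖ : ℂ) ^ 2) • u := by
    have hT : C (C u) = ∑ i, ∑ j, ((x i : ℂ) * (x j : ℂ)) • c i (c j u) := by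
      rw [hCapp (C u)]
      refine Finset.sum_congr rfl fun i _ => ?_
      rw [hCapp u, map_sum, Finset.smul_sum]
      refine Finset.sum_congr rfl fun j _ => ?_
      rw [map_smul, smul_smul]
    have h2 : (2 : ℂ) • C (C u) = (∑ i, (-2 : ℂ) * ((x i : ℂ) * (x i : ℂ))) • u := by
      have hswap : C (C u) = ∑ i, ∑ j, ((x i : ℂ) * (x j : ℂ)) • c j (c i u) := by
        rw [hT, Finset.sum_comm]
        refine Finset.sum_congr rfl fun i _ => Finset.sum_congr rfl fun j _ => ?_
        rw [mul_comm]
      calc (2 : ℂ) • C (C u)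
          = ∑ i, ∑ j, ((x i : ℂ) * (x j : ℂ)) • ((c i ∘ₗ c j + c j ∘ₗ c i) u) := by
            rw [two_smul]
            nth_rewrite 1 [hT]
            nth_rewrite 1 [hswap]
            rw [← Finset.sum_add_distrib]
            refine Finset.sum_congr rfl fun i _ => ?_
            rw [← Finset.sum_add_distrib]
            refine Finset.sum_congr rfl fun j _ => ?_
            simp [smul_add, add_comm]
        _ = ∑ i, ((-2 : ℂ) * ((x i : ℂ) * (x i : ℂ))) • u := by
            refine Finset.sum_congr rfl fun i _ => ?_
            rw [Finset.sum_eq_single i]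
            · rw [hcliff i i]; simp [smul_smul, mul_comm]
            · intro j _ hji
              rw [hcliff i j, if_neg hji.symm]; simp
            · simp
        _ = (∑ i, (-2 : ℂ) * ((x i : ℂ) * (x i : ℂ))) • u := by
            rw [Finset.sum_smul]
    have h3 : (∑ i, (-2 : ℂ) * ((x i : ℂ) * (x i : ℂ))) = (2 : ℂ) * (-(‖x‖ : ℂ) ^ 2) := by
      rw [← Finset.mul_sum]
      have hsum : (∑ i, (x i : ℂ) * (x i : ℂ)) = (((‖x‖ ^ 2 : ℝ)) : ℂ) := by
        rw [hnormsq]; push_cast; ring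
      rw [hsum]; push_cast; ring
    have h4 : (2 : ℂ) • C (C u) = (2 : ℂ) • ((-(‖x‖ : ℂ) ^ 2) • u) := by
      rw [h2, h3, mul_smul]
    exact smul_right_injective S two_ne_zero h4
  set v : S := C u with hv
  -- cross term
  have hcross : ⟪γ u, v⟫ = ⟪γ v, u⟫ := by
    rw [hherm u v, hherm v u, hv, hCγ u, inner_neg_right, ← hCskew]
  have hvv : ⟪γ v, v⟫ = (-(‖x‖ : ℂ) ^ 2) * ⟪γ u, u⟫ := by
    rw [hv, hCγ u, inner_neg_left, hCskew, neg_neg, hC2, inner_smul_right, hherm]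
  -- main expansion
  set w : S := u - Complex.I • v with hw
  have hmain : ⟪γ w, w⟫ = ((1 : ℂ) - (‖x‖ : ℂ) ^ 2) * ⟪γ u, u⟫ := by
    rw [hw, map_sub, map_smul, inner_sub_left, inner_sub_right, inner_sub_right,
      inner_smul_left, inner_smul_right, inner_smul_left, inner_smul_right,
      hcross, hvv, Complex.conj_I]
    ring_nf
    rw [Complex.I_sq]
    ring
  -- putting it together
  rw [hζ, ← hCapp u, ← hv, ← hw, ← Complex.coe_smul, map_smul,
    inner_smul_left, inner_smul_right, Complex.conj_ofReal, hmain]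
  set r := Real.sqrt ((1 - ‖x‖ ^ 2) / 2) with hrdef
  have hx2 : ‖x‖ ^ 2 < 1 := by
    have h0 : (0 : ℝ) ≤ ‖x‖ := norm_nonneg x
    nlinarith
  have hr2 : r ^ 2 = (1 - ‖x‖ ^ 2) / 2 := Real.sq_sqrt (by linarith)
  have hrpos : 0 < r := Real.sqrt_pos.mpr (by linarith)
  have hreal : (r⁻¹ * (r⁻¹ * (1 - ‖x‖ ^ 2)) : ℝ) = 2 := by
    have hrne : r ≠ 0 := ne_of_gt hrpos
    field_simp
    nlinarith [hr2]
  have key : ((r⁻¹ : ℝ) : ℂ) * (((r⁻¹ : ℝ) : ℂ) * ((1 : ℂ) - (‖x‖ : ℂ) ^ 2)) = 2 := by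
    have hc : ((1 : ℂ) - (‖x‖ : ℂ) ^ 2) = (((1 - ‖x‖ ^ 2 : ℝ)) : ℂ) := by push_cast; ring
    rw [hc, ← Complex.ofReal_mul, ← Complex.ofReal_mul, hreal]
    norm_num
  calc ((r⁻¹ : ℝ) : ℂ) * (((r⁻¹ : ℝ) : ℂ) * (((1 : ℂ) - (‖x‖ : ℂ) ^ 2) * ⟪γ u, u⟫))
      = (((r⁻¹ : ℝ) : ℂ) * (((r⁻¹ : ℝ) : ℂ) * ((1 : ℂ) - (‖x‖ : ℂ) ^ 2))) * ⟪γ u, u⟫ := by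
        ring
    _ = 2 * ⟪γ u, u⟫ := by rw [key]
end

section
/- Let ∇̄ be a connection on a Dirac bundle with associated Dirac operator D̄ satisfying the Schrödinger–Lichnerowicz formula D̄² = ∇̄*∇̄ + ℛ, and define ∇̃^±_X φ := ∇̄_X φ ± (i/2)c(X)φ and D̃^±φ := Σ_j c(e_j)∇̃^±_{e_j}φ over an n-dimensional Riemannian manifold. Then D̃^± = D̄ ∓ (in/2)Id, (∇̃^±)*∇̃^± = ∇̄*∇̄ + (n/4)Id, and consequently (D̃^±)*D̃^± = (∇̃^±)*∇̃^± + ℛ + (n(n-1)/4)Id. -/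
/-- Modified Schrödinger–Lichnerowicz formula (pointwise algebraic model with formal
adjoints realized as adjoints on a finite-dimensional complex inner product space):
with `D̄ = Σ_j c(e_j)∇̄_j`, `∇̄*∇̄ = Σ_j (∇̄_j)*∇̄_j`, `D̄² = ∇̄*∇̄ + ℛ`, `D̄` symmetric,
and `∇̃^±_j = ∇̄_j ± (i/2)c(e_j)`, `D̃^± = Σ_j c(e_j)∇̃^±_j`, one has
`D̃^± = D̄ ∓ (in/2)Id`, `(∇̃^±)*∇̃^± = ∇̄*∇̄ + (n/4)Id`, and
`(D̃^±)*D̃^± = (∇̃^±)*∇̃^± + ℛ + (n(n-1)/4)Id`. -/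
theorem stmt11 {n : ℕ} {S : Type*} [NormedAddCommGroup S] [InnerProductSpace ℂ S]
    [FiniteDimensional ℂ S]
    (c del : Fin n → S →ₗ[ℂ] S)
    (hskew : ∀ j, LinearMap.adjoint (c j) = -(c j))
    (hcliff : ∀ i j, c i ∘ₗ c j + c j ∘ₗ c i
      = if i = j then (-2 : ℂ) • LinearMap.id else 0)
    (Dbar Ndel R : S →ₗ[ℂ] S)
    (hD : Dbar = ∑ j, c j ∘ₗ del j)
    (hN : Ndel = ∑ j, LinearMap.adjoint (del j) ∘ₗ del j)
    (hSL : Dbar ∘ₗ Dbar = Ndel + R)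
    (hsym : LinearMap.adjoint Dbar = Dbar)
    (delp delm : Fin n → S →ₗ[ℂ] S)
    (hdelp : ∀ j, delp j = del j + (Complex.I / 2) • c j)
    (hdelm : ∀ j, delm j = del j - (Complex.I / 2) • c j)
    (Dp Dm : S →ₗ[ℂ] S)
    (hDp : Dp = ∑ j, c j ∘ₗ delp j) (hDm : Dm = ∑ j, c j ∘ₗ delm j) :
    (Dp = Dbar - (((n : ℂ) / 2) * Complex.I) • LinearMap.id ∧
     Dm = Dbar + (((n : ℂ) / 2) * Complex.I) • LinearMap.id) ∧
    ((∑ j, LinearMap.adjoint (delp j) ∘ₗ delp j)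
        = Ndel + ((n : ℂ) / 4) • LinearMap.id ∧
     (∑ j, LinearMap.adjoint (delm j) ∘ₗ delm j)
        = Ndel + ((n : ℂ) / 4) • LinearMap.id) ∧
    (LinearMap.adjoint Dp ∘ₗ Dp
        = (∑ j, LinearMap.adjoint (delp j) ∘ₗ delp j) + R
          + (((n : ℂ) * ((n : ℂ) - 1)) / 4) • LinearMap.id ∧
     LinearMap.adjoint Dm ∘ₗ Dm
        = (∑ j, LinearMap.adjoint (delm j) ∘ₗ delm j) + R
          + (((n : ℂ) * ((n : ℂ) - 1)) / 4) • LinearMap.id) := by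
  -- squares of Clifford multiplication
  have hcc : ∀ j, c j ∘ₗ c j = (-1 : ℂ) • (LinearMap.id : S →ₗ[ℂ] S) := by
    intro j
    have h := hcliff j j
    rw [if_pos rfl] at h
    have h2 : (2:ℂ) • (c j ∘ₗ c j) = (2:ℂ) • ((-1:ℂ) • (LinearMap.id : S →ₗ[ℂ] S)) := by
      rw [two_smul, h]; module
    exact smul_right_injective _ two_ne_zero h2
  have hsumcc : (∑ j, c j ∘ₗ c j) = (-(n:ℂ)) • (LinearMap.id : S →ₗ[ℂ] S) := by
    rw [Finset.sum_congr rfl (fun j _ => hcc j), Finset.sum_const, Finset.card_univ,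
      Fintype.card_fin, ← Nat.cast_smul_eq_nsmul ℂ, smul_smul]
    congr 1; ring
  -- first claims
  have hDp' : Dp = Dbar - (((n : ℂ) / 2) * Complex.I) • LinearMap.id := by
    rw [hDp,
      Finset.sum_congr rfl (fun j _ => by
        rw [hdelp j, LinearMap.comp_add, LinearMap.comp_smul] :
        ∀ j ∈ Finset.univ, c j ∘ₗ delp j
          = c j ∘ₗ del j + (Complex.I / 2) • (c j ∘ₗ c j)),
      Finset.sum_add_distrib, ← Finset.smul_sum, hsumcc, ← hD, smul_smul,
      sub_eq_add_neg, ← neg_smul]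
    congr 2; ring
  have hDm' : Dm = Dbar + (((n : ℂ) / 2) * Complex.I) • LinearMap.id := by
    rw [hDm,
      Finset.sum_congr rfl (fun j _ => by
        rw [hdelm j, LinearMap.comp_sub, LinearMap.comp_smul] :
        ∀ j ∈ Finset.univ, c j ∘ₗ delm j
          = c j ∘ₗ del j - (Complex.I / 2) • (c j ∘ₗ c j)),
      Finset.sum_sub_distrib, ← Finset.smul_sum, hsumcc, ← hD, smul_smul,
      sub_eq_add_neg, ← neg_smul]
    congr 2; ring
  -- adjoints of the modified connections
  have hconj : (starRingEnd ℂ) (Complex.I / 2) = -(Complex.I / 2) := by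
    simp [map_div₀, Complex.conj_I, Complex.conj_ofNat]; ring
  have hadjp : ∀ j, LinearMap.adjoint (delp j)
      = LinearMap.adjoint (del j) + (Complex.I / 2) • c j := by
    intro j
    rw [hdelp, map_add, map_smulₛₗ LinearMap.adjoint, hconj, hskew]
    module
  have hadjm : ∀ j, LinearMap.adjoint (delm j)
      = LinearMap.adjoint (del j) - (Complex.I / 2) • c j := by
    intro j
    rw [hdelm, map_sub, map_smulₛₗ LinearMap.adjoint, hconj, hskew]
    module
  -- cross-term identity
  have hcross : (∑ j, LinearMap.adjoint (del j) ∘ₗ c j) = -Dbar := by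
    have h1 : LinearMap.adjoint Dbar
        = ∑ j, -(LinearMap.adjoint (del j) ∘ₗ c j) := by
      rw [hD, map_sum]
      exact Finset.sum_congr rfl fun j _ => by
        rw [LinearMap.adjoint_comp, hskew, LinearMap.comp_neg]
    rw [hsym] at h1
    rw [h1, Finset.sum_neg_distrib, neg_neg]
  -- second claims
  have hNp : (∑ j, LinearMap.adjoint (delp j) ∘ₗ delp j)
      = Ndel + ((n : ℂ) / 4) • LinearMap.id := by
    rw [Finset.sum_congr rfl (fun j _ => by
        rw [hadjp j, hdelp j]
        simp only [LinearMap.add_comp, LinearMap.comp_add, LinearMap.smul_comp,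
          LinearMap.comp_smul, smul_smul, hcc]
        match_scalars <;> norm_num [div_mul_div_comm, Complex.I_mul_I] :
        ∀ j ∈ Finset.univ, LinearMap.adjoint (delp j) ∘ₗ delp j
          = LinearMap.adjoint (del j) ∘ₗ del j
            + (Complex.I / 2) • (LinearMap.adjoint (del j) ∘ₗ c j)
            + (Complex.I / 2) • (c j ∘ₗ del j)
            + ((1:ℂ)/4) • LinearMap.id)]
    simp only [Finset.sum_add_distrib, ← Finset.smul_sum, Finset.sum_const,
      Finset.card_univ, Fintype.card_fin, ← Nat.cast_smul_eq_nsmul ℂ]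
    rw [← hN, hcross, ← hD]
    module
  have hNm : (∑ j, LinearMap.adjoint (delm j) ∘ₗ delm j)
      = Ndel + ((n : ℂ) / 4) • LinearMap.id := by
    rw [Finset.sum_congr rfl (fun j _ => by
        rw [hadjm j, hdelm j]
        simp only [LinearMap.sub_comp, LinearMap.comp_sub, LinearMap.smul_comp,
          LinearMap.comp_smul, smul_smul, hcc]
        match_scalars <;> norm_num [div_mul_div_comm, Complex.I_mul_I] :
        ∀ j ∈ Finset.univ, LinearMap.adjoint (delm j) ∘ₗ delm j
          = LinearMap.adjoint (del j) ∘ₗ del j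
            - (Complex.I / 2) • (LinearMap.adjoint (del j) ∘ₗ c j)
            - (Complex.I / 2) • (c j ∘ₗ del j)
            + ((1:ℂ)/4) • LinearMap.id)]
    simp only [Finset.sum_add_distrib, Finset.sum_sub_distrib, ← Finset.smul_sum,
      Finset.sum_const, Finset.card_univ, Fintype.card_fin, ← Nat.cast_smul_eq_nsmul ℂ]
    rw [← hN, hcross, ← hD]
    module
  -- adjoints of the modified Dirac operators
  have hconj2 : (starRingEnd ℂ) (((n : ℂ) / 2) * Complex.I)
      = -(((n : ℂ) / 2) * Complex.I) := by
    simp [map_div₀, map_mul, Complex.conj_I, Complex.conj_ofNat]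
  have adjid : LinearMap.adjoint (LinearMap.id : S →ₗ[ℂ] S) = LinearMap.id := by
    rw [← Module.End.one_eq_id, ← LinearMap.star_eq_adjoint, star_one]
  have hadjDp : LinearMap.adjoint Dp = Dbar + (((n : ℂ) / 2) * Complex.I) • LinearMap.id := by
    rw [hDp', map_sub, hsym, map_smulₛₗ LinearMap.adjoint, hconj2, adjid,
      neg_smul, sub_neg_eq_add]
  have hadjDm : LinearMap.adjoint Dm = Dbar - (((n : ℂ) / 2) * Complex.I) • LinearMap.id := by
    rw [hDm', map_add, hsym, map_smulₛₗ LinearMap.adjoint, hconj2, adjid,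
      neg_smul, ← sub_eq_add_neg]
  refine ⟨⟨hDp', hDm'⟩, ⟨hNp, hNm⟩, ?_, ?_⟩
  · rw [hadjDp, hDp', hNp]
    simp only [LinearMap.add_comp, LinearMap.comp_sub, LinearMap.smul_comp,
      LinearMap.comp_smul, LinearMap.comp_id, LinearMap.id_comp, smul_smul, smul_add,
      smul_sub, hSL]
    have h4 : ((n : ℂ) / 2 * Complex.I) * ((n : ℂ) / 2 * Complex.I)
        = -(((n:ℂ) * (n:ℂ)) / 4) := by
      rw [mul_mul_mul_comm, Complex.I_mul_I]; ring
    rw [h4]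
    module
  · rw [hadjDm, hDm', hNm]
    simp only [LinearMap.sub_comp, LinearMap.comp_add, LinearMap.smul_comp,
      LinearMap.comp_smul, LinearMap.comp_id, LinearMap.id_comp, smul_smul, smul_add,
      smul_sub, hSL]
    have h4 : ((n : ℂ) / 2 * Complex.I) * ((n : ℂ) / 2 * Complex.I)
        = -(((n:ℂ) * (n:ℂ)) / 4) := by
      rw [mul_mul_mul_comm, Complex.I_mul_I]; ring
    rw [h4]
    module
end

section
/- Let ℋ be a complex Hilbert space, let c be a skew-adjoint unitary operator (c* = -c, c² = -Id), let 𝒟⁻ be a self-adjoint operator with 𝒟⁺ := 𝒟⁻ + i(n-1)c satisfying the intertwining relation 𝒟⁺(cψ) = -c(𝒟⁻ψ) for all ψ in the domain. If ψ_k, ψ_l are eigenvectors of 𝒟⁻ with real eigenvalues μ_k, μ_l satisfying μ_k + μ_l ≠ 0 and ⟨ψ_k, ψ_l⟩ = δ_{kl}, then -i⟨cψ_k, ψ_l⟩ = (n-1)/(μ_k + μ_l) · δ_{kl}. -/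
local notation "⟪" x ", " y "⟫" => @inner ℂ _ _ x y

/-- Spectral boundary identity: with `c` skew-adjoint, `c² = -Id`, `𝒟⁻` self-adjoint,
`𝒟⁺ = 𝒟⁻ + i(n-1)c` and `𝒟⁺(cψ) = -c(𝒟⁻ψ)`, for orthonormal eigenvectors
`𝒟⁻ψ_k = μ_kψ_k`, `𝒟⁻ψ_l = μ_lψ_l` with `μ_k + μ_l ≠ 0` one has
`-i⟨cψ_k, ψ_l⟩ = (n-1)/(μ_k+μ_l)·δ_{kl}` (inner products written in the
convention linear in the first slot, i.e. `⟨a,b⟩ = ⟪b, a⟫`). -/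
theorem stmt15 {H : Type*} [NormedAddCommGroup H] [InnerProductSpace ℂ H]
    (n : ℕ) (hn : 2 ≤ n)
    (c Dm Dp : H →ₗ[ℂ] H)
    (hcskew : ∀ x y : H, ⟪c x, y⟫ = -⟪x, c y⟫)
    (hcsq : c ∘ₗ c = -LinearMap.id)
    (hDmsym : ∀ x y : H, ⟪Dm x, y⟫ = ⟪x, Dm y⟫)
    (hDp : Dp = Dm + (((n : ℂ) - 1) * Complex.I) • c)
    (hint : ∀ ψ : H, Dp (c ψ) = -c (Dm ψ))
    {ι : Type*} [DecidableEq ι] (k l : ι) (ψ : ι → H) (μ : ι → ℝ)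
    (hek : Dm (ψ k) = (μ k : ℂ) • ψ k)
    (hel : Dm (ψ l) = (μ l : ℂ) • ψ l)
    (hμ : μ k + μ l ≠ 0)
    (horth : ⟪ψ k, ψ l⟫ = if k = l then 1 else 0) :
    -Complex.I * ⟪ψ l, c (ψ k)⟫
      = ((((n : ℝ) - 1) / (μ k + μ l)) : ℂ) * (if k = l then 1 else 0) := by
  set δ : ℂ := if k = l then 1 else 0 with hδ
  have hδconj : (starRingEnd ℂ) δ = δ := by
    rw [hδ]; split <;> simp
  have hcc : c (c (ψ k)) = -ψ k := by
    have := congrArg (fun f => f (ψ k)) hcsq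
    simpa using this
  have h1 : Dm (c (ψ k)) = (-(μ k : ℂ)) • c (ψ k) + (((n:ℂ)-1)*Complex.I) • ψ k := by
    have h := hint (ψ k)
    rw [hDp] at h
    simp only [LinearMap.add_apply, LinearMap.smul_apply] at h
    rw [hcc, hek] at h
    have h' : Dm (c (ψ k)) = -c ((μ k : ℂ) • ψ k) - (((n:ℂ)-1)*Complex.I) • (-ψ k) :=
      eq_sub_of_add_eq h
    rw [h', map_smul]
    module
  have h2 := hDmsym (c (ψ k)) (ψ l)
  rw [h1, hel, inner_add_left, inner_smul_left, inner_smul_left, inner_smul_right,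
    horth] at h2
  simp only [map_neg, Complex.conj_ofReal, map_mul, Complex.conj_I, map_sub, map_one,
    map_natCast] at h2
  set α : ℂ := ⟪c (ψ k), ψ l⟫ with hα
  have key : ((μ k : ℂ) + (μ l : ℂ)) * α = -(((n:ℂ)-1) * Complex.I) * δ := by
    linear_combination -h2
  have key2 : ((μ k : ℂ) + (μ l : ℂ)) * (starRingEnd ℂ) α
      = ((n:ℂ)-1) * Complex.I * δ := by
    have := congrArg (starRingEnd ℂ) key
    simp only [map_mul, map_add, map_neg, Complex.conj_ofReal, map_sub, map_one,
      map_natCast, Complex.conj_I, hδconj] at this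
    linear_combination this
  have hs : ((μ k : ℂ) + (μ l : ℂ)) ≠ 0 := by
    rw [← Complex.ofReal_add]
    exact_mod_cast Complex.ofReal_ne_zero.mpr hμ
  have hconj : ⟪ψ l, c (ψ k)⟫ = (starRingEnd ℂ) α := by
    rw [hα, inner_conj_symm]
  rw [hconj]
  have hcα : (starRingEnd ℂ) α = ((n:ℂ)-1) * Complex.I * δ / ((μ k : ℂ) + (μ l : ℂ)) := by
    field_simp
    linear_combination key2
  rw [hcα]
  push_cast
  field_simp
  ring_nf
  simp [Complex.I_sq]
  ring
end
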